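/- arXiv:1211.2994 — 8 statements merged into one kernel-verified Lean document; each statement's English description precedes it below -/
import Mathlib

section
/- Every odd derivation D of the Z_2-graded algebra \hat{C}^\infty(M) is of the form D(f + g\tau) = g h for a unique smooth function h \in C^\infty(M). In particular, every odd derivation vanishes on the even subalgebra C^\infty(M), and is determined by its value D(\tau) = h. -/
/-!
We model the algebra of smooth functions `C^∞(M)` abstractly as a commutative `ℝ`-algebra `A`
(vector fields on `M` are then the `ℝ`-derivations of `A`).  The `ℤ₂`-graded algebra
`Ĉ^∞(M) = C^∞(M) ⊕ C^∞(M)τ` with `τ² = 1` is modelled as `A × A`, where `(f, g)`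
represents `f + g·τ`; the even part consists of pairs `(f, 0)` and the odd part of pairs
`(0, g)`, and `τ = (0, 1)`.
-/

variable {A : Type*} [CommRing A] [Algebra ℝ A]

/-- Multiplication of the graded algebra `A ⊕ Aτ`, `τ² = 1`:
`(f + gτ)(f' + g'τ) = (ff' + gg') + (fg' + gf')τ`. -/
def gmul (x y : A × A) : A × A := (x.1 * y.1 + x.2 * y.2, x.1 * y.2 + x.2 * y.1)

/-- Every odd derivation `D` of `Ĉ^∞(M)` (an `ℝ`-linear map reversing the
parity and satisfying the graded Leibniz rule on homogeneous elements) is of the form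
`D(f + gτ) = g·h` for a unique `h ∈ C^∞(M)`.  In particular `D` vanishes on the even
subalgebra `C^∞(M)` and is determined by its value `h = D(τ)`. -/
theorem odd_derivation_classification
    (D : (A × A) →ₗ[ℝ] (A × A))
    (hgrade_even : ∀ f : A, (D (f, 0)).1 = 0)
    (hgrade_odd : ∀ g : A, (D (0, g)).2 = 0)
    (hleibniz_even : ∀ (f : A) (y : A × A),
      D (gmul (f, 0) y) = gmul (D (f, 0)) y + gmul (f, 0) (D y))
    (hleibniz_odd : ∀ (g : A) (y : A × A),
      D (gmul (0, g) y) = gmul (D (0, g)) y - gmul (0, g) (D y)) :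
    (∃! h : A, ∀ f g : A, D (f, g) = (g * h, 0)) ∧
    (∀ f : A, D (f, 0) = 0) ∧
    (∀ f g : A, D (f, g) = (g * (D (0, 1)).1, 0)) := by
  set h : A := (D (0, 1)).1 with hh
  have hτ : D ((0 : A), (1 : A)) = (h, 0) := by
    have := hgrade_odd (1 : A)
    exact Prod.ext rfl this
  -- key component computation
  have key : ∀ g : A, D (0, g) = (g * h, 0) ∧ D (g, 0) = 0 := by
    intro g
    have hg2 : (D ((g : A), (0 : A))).1 = 0 := hgrade_even g
    set d : A := (D ((g : A), (0 : A))).2 with hd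
    have hDg0 : D ((g : A), (0 : A)) = (0, d) := Prod.ext hg2 rfl
    set e : A := (D ((0 : A), g)).1 with he
    have hDg1 : D ((0 : A), g) = (e, 0) := Prod.ext rfl (hgrade_odd g)
    have h1 := hleibniz_even g ((0 : A), (1 : A))
    rw [hτ, hDg0] at h1
    simp only [gmul, mul_zero, mul_one, zero_mul, zero_add, add_zero, one_mul] at h1
    -- h1 : D (0, g) = (d, 0) + (g * h, 0) componentwise
    have h1' : e = d + g * h := by
      have := congrArg Prod.fst h1
      simpa [hDg1, gmul] using this
    have h2 := hleibniz_odd (1 : A) ((0 : A), g)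
    rw [hτ, hDg1] at h2
    simp only [gmul, mul_zero, mul_one, zero_mul, zero_add, add_zero, one_mul] at h2
    have h2' : d = h * g - e := by
      have := congrArg Prod.snd h2
      simpa [hDg0, gmul] using this
    have hee : e + e = g * h + g * h := by
      linear_combination h1' + h2'
    have h2e : (2 : ℝ) • e = (2 : ℝ) • (g * h) := by
      rw [two_smul, two_smul]; exact hee
    have heq : e = g * h := smul_right_injective A (by norm_num : (2 : ℝ) ≠ 0) h2e
    have hdz : d = 0 := by rw [h2', heq]; ring
    exact ⟨by rw [hDg1, heq], by rw [hDg0, hdz]; rfl⟩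
  have hodd : ∀ g : A, D (0, g) = (g * h, 0) := fun g => (key g).1
  have heven : ∀ f : A, D (f, 0) = 0 := fun f => (key f).2
  have hall : ∀ f g : A, D (f, g) = (g * h, 0) := by
    intro f g
    have : ((f, g) : A × A) = (f, 0) + (0, g) := by simp
    rw [this, map_add, heven, hodd, zero_add]
  refine ⟨⟨h, hall, ?_⟩, heven, hall⟩
  intro h' hh'
  have := hh' 0 1
  rw [hall 0 1] at this
  have := congrArg Prod.fst this
  simpa using this.symm
end

section
/- Every graded connection \hat{\nabla} on the graded tangent bundle \hat{T}M = TM \oplus R is uniquely determined by a quadruple (\nabla, \alpha, \alpha', X_0), where \nabla is a connection on M, \alpha, \alpha' are 1-forms, and X_0 is a vector field on M, via: \hat{\nabla}_X Y = \nabla_X Y, \hat{\nabla}_{h\xi} X = h\alpha(X)\xi, \hat{\nabla}_X h\xi = h\alpha'(X)\xi + X(h)\xi, and \hat{\nabla}_{h\xi} k\xi = hk X_0. -/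
open scoped BigOperators

/-!
We model the algebra of smooth functions `C^∞(M)` abstractly as a commutative `ℝ`-algebra `A`;
vector fields on `M` are the `ℝ`-derivations `Vec A := Derivation ℝ A A`.  A semi-Riemannian
metric together with its Levi-Civita connection is encoded by the structure `SRData`
(symmetric nondegenerate-in-use `A`-bilinear form, plus a torsion-free metric-compatible
connection).  Traces are taken with respect to a (local) orthonormal frame `OrthoFrame`.
-/

variable (A : Type*) [CommRing A] [Algebra ℝ A]

/-- Vector fields: derivations of the function algebra. -/
abbrev Vec := Derivation ℝ A A

/-- A semi-Riemannian metric `g` together with its Levi-Civita connection `∇` on the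
module of vector fields: `g` is `A`-bilinear and symmetric, `∇` is a connection which is
torsion free and metric compatible. -/
structure SRData where
  g : Vec A → Vec A → A
  g_add_left : ∀ X Y Z, g (X + Y) Z = g X Z + g Y Z
  g_smul_left : ∀ (f : A) (X Y), g (f • X) Y = f * g X Y
  g_symm : ∀ X Y, g X Y = g Y X
  conn : Vec A → Vec A → Vec A
  conn_add_left : ∀ X Y Z, conn (X + Y) Z = conn X Z + conn Y Z
  conn_add_right : ∀ X Y Z, conn X (Y + Z) = conn X Y + conn X Z
  conn_smul_left : ∀ (f : A) (X Y), conn (f • X) Y = f • conn X Y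
  conn_leibniz : ∀ (X) (f : A) (Y), conn X (f • Y) = X f • Y + f • conn X Y
  torsion_free : ∀ X Y, conn X Y - conn Y X = ⁅X, Y⁆
  metric_compat : ∀ X Y Z, X (g Y Z) = g (conn X Y) Z + g Y (conn X Z)

variable {A}

/-- The Hessian `Hes(f)(X, Y) = (∇_X df)(Y) = X(Y f) - (∇_X Y) f`. -/
def SRData.hess (S : SRData A) (f : A) (X Y : Vec A) : A := X (Y f) - (S.conn X Y) f

/-- The curvature tensor `R(X, Y)Z = ∇_X ∇_Y Z - ∇_Y ∇_X Z - ∇_[X,Y] Z`. -/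
def SRData.curv (S : SRData A) (X Y Z : Vec A) : Vec A :=
  S.conn X (S.conn Y Z) - S.conn Y (S.conn X Z) - S.conn ⁅X, Y⁆ Z

/-- A (local) orthonormal frame `E₁, …, E_n` with signs `ε_i = g(E_i, E_i) = ±1`,
together with the expansion `X = ∑ ε_i g(X, E_i) E_i`. -/
structure OrthoFrame (S : SRData A) (n : ℕ) where
  E : Fin n → Vec A
  eps : Fin n → A
  eps_sq : ∀ i, eps i * eps i = 1
  ortho : ∀ i j, S.g (E i) (E j) = if i = j then eps i else 0
  expand : ∀ X : Vec A, X = ∑ i, (eps i * S.g X (E i)) • E i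

/-- The Laplacian `Δf = tr_g Hes(f) = ∑ ε_i Hes(f)(E_i, E_i)`. -/
def SRData.lap (S : SRData A) {n : ℕ} (F : OrthoFrame S n) (f : A) : A :=
  ∑ i, F.eps i * S.hess f (F.E i) (F.E i)

/-- The Ricci curvature `Ric(X, Y) = ∑ ε_i ⟨R(X, E_i)E_i, Y⟩`. -/
def SRData.ric (S : SRData A) {n : ℕ} (F : OrthoFrame S n) (X Y : Vec A) : A :=
  ∑ i, F.eps i * S.g (S.curv X (F.E i) (F.E i)) Y

/-- The scalar curvature `R = ∑ ε_i Ric(E_i, E_i)`. -/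
def SRData.scal (S : SRData A) {n : ℕ} (F : OrthoFrame S n) : A :=
  ∑ i, F.eps i * S.ric F (F.E i) (F.E i)

/-- The divergence of a `2`-covariant tensor:
`div(T)(X) = ∑ ε_i (∇_{E_i} T)(E_i, X)`. -/
def SRData.div2 (S : SRData A) {n : ℕ} (F : OrthoFrame S n)
    (T : Vec A → Vec A → A) (X : Vec A) : A :=
  ∑ i, F.eps i *
    (F.E i (T (F.E i) X) - T (S.conn (F.E i) (F.E i)) X - T (F.E i) (S.conn (F.E i) X))

/-!
The graded tangent bundle `T̂M = TM ⊕ ℝ`: its sections `𝔛̂(M) = 𝔛(M) ⊕ C^∞(M)ξ` are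
encoded as pairs `(X, h)` representing `X + hξ`, with even part `(X, 0)` and odd part
`(0, h)`.  The Lie algebroid structure has anchor `ρ(X + hξ) = X` and brackets
`[X, hξ] = X(h)ξ`, `[fξ, gξ] = 0`.
-/

variable (A)

/-- Sections of the graded tangent bundle: pairs `(X, h)` representing `X + hξ`. -/
abbrev GVec := Vec A × A

variable {A}

/-- Multiplication of a graded vector field by a function: `f • (X + hξ) = fX + (fh)ξ`. -/
def gsmul (f : A) (p : GVec A) : GVec A := (f • p.1, f * p.2)

/-- The algebroid bracket: `[X + hξ, Y + kξ] = [X, Y] + (X(k) - Y(h))ξ`. -/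
def gbracket (p q : GVec A) : GVec A := (⁅p.1, q.1⁆, p.1 q.2 - q.1 p.2)

variable (A)

/-- A connection on the Lie algebroid `T̂M`:  `C^∞(M)`-linear in the lower variable and a
Leibniz rule via the anchor `ρ(X + hξ) = X` in the upper variable. -/
structure GConn where
  conn : GVec A → GVec A → GVec A
  add_left : ∀ p q r, conn (p + q) r = conn p r + conn q r
  add_right : ∀ p q r, conn p (q + r) = conn p q + conn p r
  smul_left : ∀ (f : A) (p q), conn (gsmul f p) q = gsmul f (conn p q)
  leibniz : ∀ (p) (f : A) (q), conn p (gsmul f q) = gsmul (p.1 f) q + gsmul f (conn p q)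

variable {A}

/-- A connection on `T̂M` is graded when `∇̂_X̂ Ŷ` is homogeneous of parity
`|X̂| + |Ŷ|` for homogeneous `X̂, Ŷ`. -/
def GConn.IsGraded (D : GConn A) : Prop :=
  (∀ X Y : Vec A, (D.conn (X, (0 : A)) (Y, (0 : A))).2 = 0) ∧
  (∀ (X : Vec A) (h : A), (D.conn (X, (0 : A)) ((0 : Vec A), h)).1 = 0) ∧
  (∀ (h : A) (Y : Vec A), (D.conn ((0 : Vec A), h) (Y, (0 : A))).1 = 0) ∧
  (∀ h k : A, (D.conn ((0 : Vec A), h) ((0 : Vec A), k)).2 = 0)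

/-- The curvature of a connection on `T̂M`. -/
def GConn.curv (D : GConn A) (p q r : GVec A) : GVec A :=
  D.conn p (D.conn q r) - D.conn q (D.conn p r) - D.conn (gbracket p q) r

/-- The graded metric `ĝ = (g, θ)` on `T̂M`, with even and odd parts orthogonal,
`⟨X, Y⟩ = g(X, Y)` and `⟨ξ, ξ⟩ = e^{2θ}` (the element `Eexp` below plays the role of
`e^{2θ}`). -/
def gmetric (S : SRData A) (Eexp : A) (p q : GVec A) : A :=
  S.g p.1 q.1 + p.2 * q.2 * Eexp

/-- The Ricci curvature of the graded metric, i.e. the trace of the curvature of `D` over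
the orthonormal frame `{E₁, …, E_n, e^{-θ}ξ}` of `T̂M`; `Einv` plays the role of
`e^{-2θ}`. -/
def gric (S : SRData A) {n : ℕ} (F : OrthoFrame S n) (D : GConn A) (Eexp Einv : A)
    (p q : GVec A) : A :=
  (∑ i, F.eps i * gmetric S Eexp (D.curv p (F.E i, (0 : A)) (F.E i, (0 : A))) q)
    + Einv * gmetric S Eexp (D.curv p ((0 : Vec A), (1 : A)) ((0 : Vec A), (1 : A))) q

/-- The scalar curvature of the graded metric: the `ĝ`-trace of `gric`. -/
def gscal (S : SRData A) {n : ℕ} (F : OrthoFrame S n) (D : GConn A) (Eexp Einv : A) : A :=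
  (∑ i, F.eps i * gric S F D Eexp Einv (F.E i, (0 : A)) (F.E i, (0 : A)))
    + Einv * gric S F D Eexp Einv ((0 : Vec A), (1 : A)) ((0 : Vec A), (1 : A))

/-- The graded Hessian `Ĥes(f)(X̂, Ŷ) = (∇̂_X̂ d̂f)(Ŷ) = ρ(X̂)(d̂f(Ŷ)) - d̂f(∇̂_X̂ Ŷ)`,
where `d̂f(X + hξ) = X(f)`. -/
def ghess (D : GConn A) (f : A) (p q : GVec A) : A :=
  p.1 (q.1 f) - (D.conn p q).1 f

/-- Every graded connection `∇̂` on `T̂M = TM ⊕ ℝ` is uniquely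
determined by a quadruple `(∇, α, α', X₀)` — a connection `∇` on `M`, two 1-forms
`α, α'`, and a vector field `X₀` — via
`∇̂_X Y = ∇_X Y`, `∇̂_{hξ} X = h α(X) ξ`, `∇̂_X (hξ) = (h α'(X) + X(h)) ξ`, and
`∇̂_{hξ} (kξ) = hk X₀`. -/
theorem graded_connection_classification
    {A : Type*} [CommRing A] [Algebra ℝ A] (D : GConn A) (hD : D.IsGraded) :
    ∃! q : (Vec A → Vec A → Vec A) × (Vec A → A) × (Vec A → A) × Vec A,
      (∀ X Y Z : Vec A, q.1 (X + Y) Z = q.1 X Z + q.1 Y Z) ∧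
      (∀ X Y Z : Vec A, q.1 X (Y + Z) = q.1 X Y + q.1 X Z) ∧
      (∀ (f : A) (X Y : Vec A), q.1 (f • X) Y = f • q.1 X Y) ∧
      (∀ (X : Vec A) (f : A) (Y : Vec A), q.1 X (f • Y) = X f • Y + f • q.1 X Y) ∧
      (∀ X Y : Vec A, q.2.1 (X + Y) = q.2.1 X + q.2.1 Y) ∧
      (∀ (f : A) (X : Vec A), q.2.1 (f • X) = f * q.2.1 X) ∧
      (∀ X Y : Vec A, q.2.2.1 (X + Y) = q.2.2.1 X + q.2.2.1 Y) ∧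
      (∀ (f : A) (X : Vec A), q.2.2.1 (f • X) = f * q.2.2.1 X) ∧
      (∀ X Y : Vec A, D.conn (X, (0 : A)) (Y, (0 : A)) = (q.1 X Y, 0)) ∧
      (∀ (h : A) (X : Vec A),
        D.conn ((0 : Vec A), h) (X, (0 : A)) = (0, h * q.2.1 X)) ∧
      (∀ (X : Vec A) (h : A),
        D.conn (X, (0 : A)) ((0 : Vec A), h) = (0, h * q.2.2.1 X + X h)) ∧
      (∀ h k : A,
        D.conn ((0 : Vec A), h) ((0 : Vec A), k) = ((h * k) • q.2.2.2, 0)) := by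
  obtain ⟨g1, g2, g3, g4⟩ := hD
  -- basic rewriting lemmas
  have hsm : ∀ (h : A), ((0 : Vec A), h) = gsmul h ((0 : Vec A), (1 : A)) := by
    intro h; simp [gsmul]
  -- key formulas
  have key1 : ∀ X Y : Vec A,
      D.conn (X, (0 : A)) (Y, (0 : A)) = ((D.conn (X, (0 : A)) (Y, (0 : A))).1, 0) := by
    intro X Y; exact Prod.ext rfl (g1 X Y)
  have key2 : ∀ (h : A) (X : Vec A),
      D.conn ((0 : Vec A), h) (X, (0 : A))
        = (0, h * (D.conn ((0 : Vec A), (1 : A)) (X, (0 : A))).2) := by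
    intro h X
    rw [hsm h, D.smul_left]
    refine Prod.ext ?_ rfl
    show h • (D.conn ((0 : Vec A), (1 : A)) (X, (0 : A))).1 = 0
    rw [g3 1 X, smul_zero]
  have key3 : ∀ (X : Vec A) (h : A),
      D.conn (X, (0 : A)) ((0 : Vec A), h)
        = (0, h * (D.conn (X, (0 : A)) ((0 : Vec A), (1 : A))).2 + X h) := by
    intro X h
    rw [hsm h, D.leibniz]
    refine Prod.ext ?_ ?_
    · show (X h) • (0 : Vec A) + h • (D.conn (X, (0 : A)) ((0 : Vec A), (1 : A))).1 = 0
      rw [g2 X 1, smul_zero, smul_zero, add_zero]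
    · show X h * 1 + h * (D.conn (X, (0 : A)) ((0 : Vec A), (1 : A))).2
          = h * (D.conn (X, (0 : A)) ((0 : Vec A), (1 : A))).2 + X h
      rw [mul_one, add_comm]
  have key4 : ∀ h k : A,
      D.conn ((0 : Vec A), h) ((0 : Vec A), k)
        = ((h * k) • (D.conn ((0 : Vec A), (1 : A)) ((0 : Vec A), (1 : A))).1, 0) := by
    intro h k
    rw [hsm h, D.smul_left, hsm k, D.leibniz]
    have hz : ((0 : Vec A) : Vec A) k = 0 := by simp
    refine Prod.ext ?_ ?_
    · show h • (((0 : Vec A) k) • (0 : Vec A)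
          + k • (D.conn ((0 : Vec A), (1 : A)) ((0 : Vec A), (1 : A))).1)
          = (h * k) • (D.conn ((0 : Vec A), (1 : A)) ((0 : Vec A), (1 : A))).1
      rw [smul_zero, zero_add, smul_smul]
    · show h * (((0 : Vec A) k) * 1
          + k * (D.conn ((0 : Vec A), (1 : A)) ((0 : Vec A), (1 : A))).2) = 0
      rw [g4 1 1, hz, mul_zero, zero_mul, zero_add, mul_zero]
  have hadd : ∀ X Y : Vec A, ((X + Y : Vec A), (0 : A)) = (X, (0 : A)) + (Y, (0 : A)) := by
    intro X Y; exact Prod.ext rfl (by simp)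
  refine ⟨⟨fun X Y => (D.conn (X, (0 : A)) (Y, (0 : A))).1,
      fun X => (D.conn ((0 : Vec A), (1 : A)) (X, (0 : A))).2,
      fun X => (D.conn (X, (0 : A)) ((0 : Vec A), (1 : A))).2,
      (D.conn ((0 : Vec A), (1 : A)) ((0 : Vec A), (1 : A))).1⟩,
    ⟨?_, ?_, ?_, ?_, ?_, ?_, ?_, ?_, ?_, ?_, ?_, ?_⟩, ?_⟩
  · intro X Y Z
    show (D.conn (X + Y, (0 : A)) (Z, (0 : A))).1
        = (D.conn (X, (0 : A)) (Z, (0 : A))).1 + (D.conn (Y, (0 : A)) (Z, (0 : A))).1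
    rw [hadd X Y, D.add_left]; rfl
  · intro X Y Z
    show (D.conn (X, (0 : A)) (Y + Z, (0 : A))).1
        = (D.conn (X, (0 : A)) (Y, (0 : A))).1 + (D.conn (X, (0 : A)) (Z, (0 : A))).1
    rw [hadd Y Z, D.add_right]; rfl
  · intro f X Y
    show (D.conn (f • X, (0 : A)) (Y, (0 : A))).1 = f • (D.conn (X, (0 : A)) (Y, (0 : A))).1
    have : ((f • X : Vec A), (0 : A)) = gsmul f (X, (0 : A)) := by simp [gsmul]
    rw [this, D.smul_left]; rfl
  · intro X f Y
    show (D.conn (X, (0 : A)) (f • Y, (0 : A))).1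
        = X f • Y + f • (D.conn (X, (0 : A)) (Y, (0 : A))).1
    have : ((f • Y : Vec A), (0 : A)) = gsmul f (Y, (0 : A)) := by simp [gsmul]
    rw [this, D.leibniz]; rfl
  · intro X Y
    show (D.conn ((0 : Vec A), (1 : A)) (X + Y, (0 : A))).2
        = (D.conn ((0 : Vec A), (1 : A)) (X, (0 : A))).2
          + (D.conn ((0 : Vec A), (1 : A)) (Y, (0 : A))).2
    rw [hadd X Y, D.add_right]; rfl
  · intro f X
    show (D.conn ((0 : Vec A), (1 : A)) (f • X, (0 : A))).2
        = f * (D.conn ((0 : Vec A), (1 : A)) (X, (0 : A))).2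
    have hfx : ((f • X : Vec A), (0 : A)) = gsmul f (X, (0 : A)) := by simp [gsmul]
    rw [hfx, D.leibniz]
    show ((0 : Vec A) f) * 0 + f * _ = f * _
    rw [mul_zero, zero_add]
  · intro X Y
    show (D.conn (X + Y, (0 : A)) ((0 : Vec A), (1 : A))).2
        = (D.conn (X, (0 : A)) ((0 : Vec A), (1 : A))).2
          + (D.conn (Y, (0 : A)) ((0 : Vec A), (1 : A))).2
    rw [hadd X Y, D.add_left]; rfl
  · intro f X
    show (D.conn (f • X, (0 : A)) ((0 : Vec A), (1 : A))).2
        = f * (D.conn (X, (0 : A)) ((0 : Vec A), (1 : A))).2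
    have hfx : ((f • X : Vec A), (0 : A)) = gsmul f (X, (0 : A)) := by simp [gsmul]
    rw [hfx, D.smul_left]; rfl
  · intro X Y; exact key1 X Y
  · intro h X; exact key2 h X
  · intro X h; exact key3 X h
  · intro h k; exact key4 h k
  · rintro ⟨n', a', b', x'⟩ ⟨-, -, -, -, -, -, -, -, e9, e10, e11, e12⟩
    refine Prod.ext ?_ (Prod.ext ?_ (Prod.ext ?_ ?_))
    · funext X Y
      show n' X Y = (D.conn (X, (0 : A)) (Y, (0 : A))).1
      rw [e9 X Y]
    · funext X
      show a' X = (D.conn ((0 : Vec A), (1 : A)) (X, (0 : A))).2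
      rw [e10 1 X]
      exact (one_mul _).symm
    · funext X
      show b' X = (D.conn (X, (0 : A)) ((0 : Vec A), (1 : A))).2
      rw [e11 X 1]
      show b' X = 1 * b' X + X 1
      rw [one_mul, Derivation.map_one_eq_zero, add_zero]
    · show x' = (D.conn ((0 : Vec A), (1 : A)) ((0 : Vec A), (1 : A))).1
      rw [e12 1 1]
      show x' = ((1 : A) * 1) • x'
      rw [mul_one, one_smul]
end

section
/- A graded connection \hat{\nabla} on \hat{T}M determined by the quadruple (\nabla, \alpha, \alpha', X_0) is torsion free if and only if \nabla is torsion free and \alpha = \alpha'. -/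
open scoped BigOperators

/-!
We model the algebra of smooth functions `C^∞(M)` abstractly as a commutative `ℝ`-algebra `A`;
vector fields on `M` are the `ℝ`-derivations `Vec A := Derivation ℝ A A`.  A semi-Riemannian
metric together with its Levi-Civita connection is encoded by the structure `SRData`
(symmetric nondegenerate-in-use `A`-bilinear form, plus a torsion-free metric-compatible
connection).  Traces are taken with respect to a (local) orthonormal frame `OrthoFrame`.
-/

variable (A : Type*) [CommRing A] [Algebra ℝ A]

variable {A}

/-!
The graded tangent bundle `T̂M = TM ⊕ ℝ`: its sections `𝔛̂(M) = 𝔛(M) ⊕ C^∞(M)ξ` are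
encoded as pairs `(X, h)` representing `X + hξ`, with even part `(X, 0)` and odd part
`(0, h)`.  The Lie algebroid structure has anchor `ρ(X + hξ) = X` and brackets
`[X, hξ] = X(h)ξ`, `[fξ, gξ] = 0`.
-/

variable (A)

variable {A}

variable (A)

variable {A}

/-- The torsion of a connection on `T̂M`:
`T̂(X̂, Ŷ) = ∇̂_X̂ Ŷ - ∇̂_Ŷ X̂ - [X̂, Ŷ]`. -/
def GConn.torsion {A : Type*} [CommRing A] [Algebra ℝ A] (D : GConn A) (p q : GVec A) :
    GVec A :=
  D.conn p q - D.conn q p - gbracket p q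

/-- A graded connection `∇̂` on `T̂M` determined by the quadruple
`(∇, α, α', X₀)` is torsion free if and only if `∇` is torsion free and `α = α'`. -/
theorem graded_connection_torsion_free_iff
    {A : Type*} [CommRing A] [Algebra ℝ A] (D : GConn A)
    (nabla : Vec A → Vec A → Vec A) (α α' : Vec A → A) (X₀ : Vec A)
    (h1 : ∀ X Y : Vec A, D.conn (X, (0 : A)) (Y, (0 : A)) = (nabla X Y, 0))
    (h2 : ∀ (h : A) (X : Vec A), D.conn ((0 : Vec A), h) (X, (0 : A)) = (0, h * α X))
    (h3 : ∀ (X : Vec A) (h : A),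
      D.conn (X, (0 : A)) ((0 : Vec A), h) = (0, h * α' X + X h))
    (h4 : ∀ h k : A, D.conn ((0 : Vec A), h) ((0 : Vec A), k) = ((h * k) • X₀, 0)) :
    (∀ p q : GVec A, D.torsion p q = 0) ↔
      ((∀ X Y : Vec A, nabla X Y - nabla Y X = ⁅X, Y⁆) ∧ α = α') := by
  constructor
  · intro H
    constructor
    · intro X Y
      have hT := H (X, 0) (Y, 0)
      simp only [GConn.torsion, h1, gbracket] at hT
      have := congrArg Prod.fst hT
      simp only [Prod.fst_sub, Prod.fst_zero] at this
      exact sub_eq_zero.mp this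
    · funext X
      have hT := H (X, 0) ((0 : Vec A), 1)
      simp only [GConn.torsion, h2, h3, gbracket] at hT
      have := congrArg Prod.snd hT
      simp only [Prod.snd_sub, Prod.snd_zero, one_mul,
        Derivation.map_one_eq_zero, Derivation.zero_apply] at this
      linear_combination -this
  · rintro ⟨ht, rfl⟩
    rintro ⟨X, h⟩ ⟨Y, k⟩
    have eX : ((X, h) : GVec A) = (X, 0) + (0, h) := by simp
    have eY : ((Y, k) : GVec A) = (Y, 0) + (0, k) := by simp
    rw [GConn.torsion, eX, eY, D.add_left, D.add_left, D.add_right, D.add_right,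
      D.add_right, D.add_right, h1, h2, h3, h2, h3, h1, h4, h4]
    have hb : gbracket ((X, 0) + ((0 : Vec A), h)) ((Y, 0) + ((0 : Vec A), k))
        = (⁅X, Y⁆, X k - Y h) := by
      simp [gbracket]
    rw [hb]
    ext
    · show (nabla X Y + 0 + (0 + (h * k) • X₀) - (nabla Y X + 0 + (0 + (k * h) • X₀))
        - ⁅X, Y⁆) _ = (0 : Vec A) _
      rw [mul_comm k h]
      have : nabla X Y + 0 + (0 + (h * k) • X₀) - (nabla Y X + 0 + (0 + (h * k) • X₀))
          - ⁅X, Y⁆ = nabla X Y - nabla Y X - ⁅X, Y⁆ := by abel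
      rw [this, ht, sub_self]
    · show (0 : A) + (k * α X + X k) + (h * α Y + 0) - (0 + (h * α Y + Y h) + (k * α X + 0))
        - (X k - Y h) = 0
      ring
end

section
/- The Levi-Civita connection of a graded metric on \hat{T}M (the unique torsion-free metric-compatible connection given by the Koszul formula) is a graded connection: for homogeneous sections \hat{X}, \hat{Y}, the section \hat{\nabla}_{\hat{X}}\hat{Y} is homogeneous of parity |\hat{X}| + |\hat{Y}|. -/
open scoped BigOperators

/-!
We model the algebra of smooth functions `C^∞(M)` abstractly as a commutative `ℝ`-algebra `A`;
vector fields on `M` are the `ℝ`-derivations `Vec A := Derivation ℝ A A`.  A semi-Riemannian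
metric together with its Levi-Civita connection is encoded by the structure `SRData`
(symmetric nondegenerate-in-use `A`-bilinear form, plus a torsion-free metric-compatible
connection).  Traces are taken with respect to a (local) orthonormal frame `OrthoFrame`.
-/

variable (A : Type*) [CommRing A] [Algebra ℝ A]

variable {A}

/-!
The graded tangent bundle `T̂M = TM ⊕ ℝ`: its sections `𝔛̂(M) = 𝔛(M) ⊕ C^∞(M)ξ` are
encoded as pairs `(X, h)` representing `X + hξ`, with even part `(X, 0)` and odd part
`(0, h)`.  The Lie algebroid structure has anchor `ρ(X + hξ) = X` and brackets
`[X, hξ] = X(h)ξ`, `[fξ, gξ] = 0`.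
-/

variable (A)

variable {A}

variable (A)

variable {A}

/-- The Levi-Civita connection of a graded metric on `T̂M` — i.e. any
connection satisfying the Koszul formula for a symmetric, `A`-bilinear, nondegenerate
bundle metric `B` for which even vectors are orthogonal to odd vectors — is a graded
connection: `∇̂_X̂ Ŷ` is homogeneous of parity `|X̂| + |Ŷ|` for homogeneous `X̂, Ŷ`. -/
theorem levi_civita_of_graded_metric_is_graded
    {A : Type*} [CommRing A] [Algebra ℝ A]
    (B : GVec A → GVec A → A)
    (hadd : ∀ p q r : GVec A, B (p + q) r = B p r + B q r)
    (hsmul : ∀ (f : A) (p q : GVec A), B (gsmul f p) q = f * B p q)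
    (hsymm : ∀ p q : GVec A, B p q = B q p)
    (horth : ∀ (X : Vec A) (h : A), B (X, (0 : A)) ((0 : Vec A), h) = 0)
    (hnondeg : ∀ p : GVec A, (∀ q : GVec A, B p q = 0) → p = 0)
    (D : GConn A)
    (hkoszul : ∀ p q r : GVec A,
      2 * B (D.conn p q) r =
        p.1 (B q r) + q.1 (B r p) - r.1 (B p q)
          + B (gbracket p q) r - B (gbracket q r) p + B (gbracket r p) q) :
    D.IsGraded := by
  -- `2` is invertible in an `ℝ`-algebra
  have half : ∀ a : A, 2 * a = 0 → a = 0 := by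
    intro a h
    have h2 : (2 : ℝ) • a = 2 * a := by
      rw [Algebra.smul_def, map_ofNat]
    calc a = (2⁻¹ : ℝ) • ((2 : ℝ) • a) := by rw [smul_smul]; norm_num
      _ = 0 := by rw [h2, h, smul_zero]
  have hB0 : ∀ q : GVec A, B 0 q = 0 := by
    intro q
    have h := hsmul 0 0 q
    have hz : gsmul (0 : A) (0 : GVec A) = 0 := by
      simp [gsmul, Prod.ext_iff]
    rw [hz, zero_mul] at h
    exact h
  have hB00 : ∀ q : GVec A, B ((0 : Vec A), (0 : A)) q = 0 := fun q => hB0 q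
  have horth' : ∀ (h : A) (X : Vec A), B ((0 : Vec A), h) (X, (0 : A)) = 0 := by
    intro h X; rw [hsymm]; exact horth X h
  have hadd_right : ∀ p q r : GVec A, B p (q + r) = B p q + B p r := by
    intro p q r
    rw [hsymm, hadd, hsymm q p, hsymm r p]
  have comp2 : ∀ v : GVec A, (∀ h : A, B v ((0 : Vec A), h) = 0) → v.2 = 0 := by
    intro v hv
    obtain ⟨Z, k⟩ := v
    have hsplit : ((Z, k) : GVec A) = ((Z, (0 : A)) + ((0 : Vec A), k)) := by
      simp [Prod.ext_iff]
    have hodd : ∀ m : A, B ((0 : Vec A), k) ((0 : Vec A), m) = 0 := by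
      intro m
      have h := hv m
      rw [hsplit, hadd, horth, zero_add] at h
      exact h
    have key : ∀ q : GVec A, B ((0 : Vec A), k) q = 0 := by
      intro q
      obtain ⟨W, m⟩ := q
      have hq : ((W, m) : GVec A) = ((W, (0 : A)) + ((0 : Vec A), m)) := by
        simp [Prod.ext_iff]
      rw [hq, hadd_right, horth' k W, hodd m, add_zero]
    have := hnondeg _ key
    exact congrArg Prod.snd this
  have comp1 : ∀ v : GVec A, (∀ W : Vec A, B v (W, (0 : A)) = 0) → v.1 = 0 := by
    intro v hv
    obtain ⟨Z, k⟩ := v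
    have hsplit : ((Z, k) : GVec A) = ((Z, (0 : A)) + ((0 : Vec A), k)) := by
      simp [Prod.ext_iff]
    have heven : ∀ W : Vec A, B (Z, (0 : A)) (W, (0 : A)) = 0 := by
      intro W
      have h := hv W
      rw [hsplit, hadd, horth' k W, add_zero] at h
      exact h
    have key : ∀ q : GVec A, B (Z, (0 : A)) q = 0 := by
      intro q
      obtain ⟨W, m⟩ := q
      have hq : ((W, m) : GVec A) = ((W, (0 : A)) + ((0 : Vec A), m)) := by
        simp [Prod.ext_iff]
      rw [hq, hadd_right, heven W, horth Z m, add_zero]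
    have := hnondeg _ key
    exact congrArg Prod.fst this
  refine ⟨?_, ?_, ?_, ?_⟩
  · intro X Y
    apply comp2
    intro h
    apply half
    rw [hkoszul]
    simp [gbracket, horth, horth', hB00, hB0]
  · intro X h
    apply comp1
    intro W
    apply half
    rw [hkoszul]
    simp [gbracket, horth, horth', hB00, hB0]
  · intro h Y
    apply comp1
    intro W
    apply half
    rw [hkoszul]
    simp [gbracket, horth, horth', hB00, hB0]
  · intro h k
    apply comp2
    intro m
    apply half
    rw [hkoszul]
    simp [gbracket, horth, horth', hB00, hB0]
end

section
/- Let \hat{g} = (g, \theta) be the graded metric on \hat{T}M with <X, Y> = g(X, Y) and <\xi, \xi> = e^{2\theta}. Then its Levi-Civita connection is given by \hat{\nabla}_X Y = \nabla_X Y (the Levi-Civita connection of g), \hat{\nabla}_\xi X = \hat{\nabla}_X \xi = d\theta(X)\xi, and \hat{\nabla}_\xi \xi = -e^{2\theta}\nabla\theta, where \nabla\theta is the g-gradient of \theta. -/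
open scoped BigOperators

/-!
We model the algebra of smooth functions `C^∞(M)` abstractly as a commutative `ℝ`-algebra `A`;
vector fields on `M` are the `ℝ`-derivations `Vec A := Derivation ℝ A A`.  A semi-Riemannian
metric together with its Levi-Civita connection is encoded by the structure `SRData`
(symmetric nondegenerate-in-use `A`-bilinear form, plus a torsion-free metric-compatible
connection).  Traces are taken with respect to a (local) orthonormal frame `OrthoFrame`.
-/

variable (A : Type*) [CommRing A] [Algebra ℝ A]

variable {A}

/-!
The graded tangent bundle `T̂M = TM ⊕ ℝ`: its sections `𝔛̂(M) = 𝔛(M) ⊕ C^∞(M)ξ` are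
encoded as pairs `(X, h)` representing `X + hξ`, with even part `(X, 0)` and odd part
`(0, h)`.  The Lie algebroid structure has anchor `ρ(X + hξ) = X` and brackets
`[X, hξ] = X(h)ξ`, `[fξ, gξ] = 0`.
-/

variable (A)

variable {A}

variable (A)

variable {A}

section Aux

variable {A : Type*} [CommRing A] [Algebra ℝ A]

lemma aux_two_cancel {x y : A} (h : 2 * x = 2 * y) : x = y := by
  have h' : (2 : ℝ) • x = (2 : ℝ) • y := by
    rw [two_smul, ← two_mul, two_smul, ← two_mul]; exact h
  calc x = (2 : ℝ)⁻¹ • ((2 : ℝ) • x) := by rw [smul_smul]; norm_num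
    _ = (2 : ℝ)⁻¹ • ((2 : ℝ) • y) := by rw [h']
    _ = y := by rw [smul_smul]; norm_num

lemma aux_g_zero_left (S : SRData A) (Z : Vec A) : S.g 0 Z = 0 := by
  have := S.g_smul_left 0 0 Z
  simpa using this

lemma aux_g_zero_right (S : SRData A) (Z : Vec A) : S.g Z 0 = 0 := by
  rw [S.g_symm]; exact aux_g_zero_left S Z

lemma aux_g_sub_left' (S : SRData A) (X Y Z : Vec A) :
    S.g (X - Y) Z = S.g X Z - S.g Y Z := by
  have h1 : S.g ((X - Y) + Y) Z = S.g (X - Y) Z + S.g Y Z := S.g_add_left _ _ _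
  rw [sub_add_cancel] at h1
  linear_combination -h1

lemma aux_koszul (S : SRData A) (X Y Z : Vec A) :
    2 * S.g (S.conn X Y) Z =
      X (S.g Y Z) + Y (S.g Z X) - Z (S.g X Y)
        + S.g ⁅X, Y⁆ Z - S.g ⁅Y, Z⁆ X + S.g ⁅Z, X⁆ Y := by
  rw [← S.torsion_free X Y, ← S.torsion_free Y Z, ← S.torsion_free Z X,
    aux_g_sub_left', aux_g_sub_left', aux_g_sub_left']
  have h1 := S.metric_compat X Y Z
  have h2 := S.metric_compat Y Z X
  have h3 := S.metric_compat Z X Y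
  have s1 := S.g_symm Y (S.conn X Z)
  have s2 := S.g_symm Z (S.conn Y X)
  have s3 := S.g_symm X (S.conn Z Y)
  linear_combination -h1 - h2 + h3 - s1 - s2 + s3

lemma aux_gmetric_sub_left (S : SRData A) (Eexp : A) (a b r : GVec A) :
    gmetric S Eexp (a - b) r = gmetric S Eexp a r - gmetric S Eexp b r := by
  show gmetric S Eexp (a.1 - b.1, a.2 - b.2) r = _
  simp only [gmetric, aux_g_sub_left']
  ring

lemma aux_eq_of_pairing (S : SRData A) (Eexp : A)
    (hnondeg : ∀ p : GVec A, (∀ q : GVec A, gmetric S Eexp p q = 0) → p = 0)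
    (a b : GVec A) (h : ∀ r, gmetric S Eexp a r = gmetric S Eexp b r) : a = b := by
  have := hnondeg (a - b) (fun r => by rw [aux_gmetric_sub_left, h r, sub_self])
  exact sub_eq_zero.mp this

end Aux

/-- Let `ĝ = (g, θ)` be the graded metric on `T̂M` with
`⟨X, Y⟩ = g(X, Y)` and `⟨ξ, ξ⟩ = e^{2θ}` (the element `Eexp` plays the role of `e^{2θ}`:
it is a unit satisfying `X(e^{2θ}) = 2 X(θ) e^{2θ}`).  Then its Levi-Civita connection
(the connection satisfying the Koszul formula) is given by `∇̂_X Y = ∇_X Y` (the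
Levi-Civita connection of `g`), `∇̂_ξ X = ∇̂_X ξ = dθ(X) ξ`, and
`∇̂_ξ ξ = -e^{2θ} ∇θ`, where `∇θ` is the `g`-gradient of `θ`. -/
theorem graded_levi_civita_connection
    {A : Type*} [CommRing A] [Algebra ℝ A] (S : SRData A) (θ Eexp : A)
    (hEunit : IsUnit Eexp)
    (hEexp : ∀ X : Vec A, X Eexp = 2 * X θ * Eexp)
    (hnondeg : ∀ p : GVec A, (∀ q : GVec A, gmetric S Eexp p q = 0) → p = 0)
    (G : Vec A) (hG : ∀ X : Vec A, S.g G X = X θ)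
    (D : GConn A)
    (hkoszul : ∀ p q r : GVec A,
      2 * gmetric S Eexp (D.conn p q) r =
        p.1 (gmetric S Eexp q r) + q.1 (gmetric S Eexp r p) - r.1 (gmetric S Eexp p q)
          + gmetric S Eexp (gbracket p q) r - gmetric S Eexp (gbracket q r) p
          + gmetric S Eexp (gbracket r p) q) :
    (∀ X Y : Vec A, D.conn (X, (0 : A)) (Y, (0 : A)) = (S.conn X Y, 0)) ∧
    (∀ X : Vec A, D.conn ((0 : Vec A), (1 : A)) (X, (0 : A)) = (0, X θ)) ∧
    (∀ X : Vec A, D.conn (X, (0 : A)) ((0 : Vec A), (1 : A)) = (0, X θ)) ∧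
    D.conn ((0 : Vec A), (1 : A)) ((0 : Vec A), (1 : A)) = (-(Eexp • G), 0) := by
  refine ⟨?_, ?_, ?_, ?_⟩
  · intro X Y
    refine aux_eq_of_pairing S Eexp hnondeg _ _ (fun r => ?_)
    refine aux_two_cancel ?_
    rw [hkoszul]
    obtain ⟨Z, k⟩ := r
    simp only [gmetric, gbracket, aux_g_zero_left, aux_g_zero_right, mul_zero, zero_mul,
      add_zero, zero_add, map_zero, Derivation.map_one_eq_zero, lie_zero, zero_lie, sub_zero,
      zero_sub]
    have hk := aux_koszul S X Y Z
    linear_combination -hk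
  · intro X
    refine aux_eq_of_pairing S Eexp hnondeg _ _ (fun r => ?_)
    refine aux_two_cancel ?_
    rw [hkoszul]
    obtain ⟨Z, k⟩ := r
    have hXkE : X (k * Eexp) = X k * Eexp + k * (2 * X θ * Eexp) := by
      rw [Derivation.leibniz, hEexp, smul_eq_mul, smul_eq_mul]; ring
    simp only [gmetric, gbracket, aux_g_zero_left, aux_g_zero_right, mul_zero, zero_mul,
      one_mul, mul_one, add_zero, zero_add, map_zero, Derivation.map_one_eq_zero, lie_zero,
      zero_lie, sub_zero, zero_sub, Derivation.zero_apply, hXkE]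
    ring
  · intro X
    refine aux_eq_of_pairing S Eexp hnondeg _ _ (fun r => ?_)
    refine aux_two_cancel ?_
    rw [hkoszul]
    obtain ⟨Z, k⟩ := r
    have hXkE : X (k * Eexp) = X k * Eexp + k * (2 * X θ * Eexp) := by
      rw [Derivation.leibniz, hEexp, smul_eq_mul, smul_eq_mul]; ring
    simp only [gmetric, gbracket, aux_g_zero_left, aux_g_zero_right, mul_zero, zero_mul,
      one_mul, mul_one, add_zero, zero_add, map_zero, Derivation.map_one_eq_zero, lie_zero,
      zero_lie, sub_zero, zero_sub, Derivation.zero_apply, hXkE]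
    ring
  · refine aux_eq_of_pairing S Eexp hnondeg _ _ (fun r => ?_)
    refine aux_two_cancel ?_
    rw [hkoszul]
    obtain ⟨Z, k⟩ := r
    have hgEG : S.g (-(Eexp • G)) Z = -(Eexp * Z θ) := by
      have : S.g (0 - Eexp • G) Z = S.g 0 Z - S.g (Eexp • G) Z := aux_g_sub_left' S _ _ _
      rw [zero_sub] at this
      rw [this, aux_g_zero_left, S.g_smul_left, hG]
      ring
    simp only [gmetric, gbracket, aux_g_zero_left, aux_g_zero_right, mul_zero, zero_mul,
      one_mul, mul_one, add_zero, zero_add, map_zero, Derivation.map_one_eq_zero, lie_zero,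
      zero_lie, sub_zero, zero_sub, sub_self, Derivation.zero_apply, hEexp Z, hgEG]
    ring
end

section
/- For the Levi-Civita connection \hat{\nabla} of the graded metric \hat{g} = (g, \theta), the curvature tensor \hat{R} satisfies: \hat{R}(X,Y)(Z) = R(X,Y)(Z) (the curvature of g), \hat{R}(X,Y)(\xi) = 0, \hat{R}(X,\xi)(Y) = ((\nabla_X d\theta)(Y) + d\theta(X)d\theta(Y))\xi, and \hat{R}(X,\xi)(\xi) = \nabla_X X_0 - d\theta(X) X_0 where X_0 = -e^{2\theta}\nabla\theta. -/
open scoped BigOperators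

/-!
We model the algebra of smooth functions `C^∞(M)` abstractly as a commutative `ℝ`-algebra `A`;
vector fields on `M` are the `ℝ`-derivations `Vec A := Derivation ℝ A A`.  A semi-Riemannian
metric together with its Levi-Civita connection is encoded by the structure `SRData`
(symmetric nondegenerate-in-use `A`-bilinear form, plus a torsion-free metric-compatible
connection).  Traces are taken with respect to a (local) orthonormal frame `OrthoFrame`.
-/

variable (A : Type*) [CommRing A] [Algebra ℝ A]

variable {A}

/-!
The graded tangent bundle `T̂M = TM ⊕ ℝ`: its sections `𝔛̂(M) = 𝔛(M) ⊕ C^∞(M)ξ` are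
encoded as pairs `(X, h)` representing `X + hξ`, with even part `(X, 0)` and odd part
`(0, h)`.  The Lie algebroid structure has anchor `ρ(X + hξ) = X` and brackets
`[X, hξ] = X(h)ξ`, `[fξ, gξ] = 0`.
-/

variable (A)

variable {A}

variable (A)

variable {A}

/-- For the Levi-Civita connection `∇̂` of the graded metric
`ĝ = (g, θ)` (given explicitly by `∇̂_X Y = ∇_X Y`, `∇̂_ξ X = ∇̂_X ξ = dθ(X)ξ`,
`∇̂_ξ ξ = -e^{2θ}∇θ`), the curvature tensor `R̂` satisfies:
`R̂(X,Y)Z = R(X,Y)Z`, `R̂(X,Y)ξ = 0`,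
`R̂(X,ξ)Y = ((∇_X dθ)(Y) + dθ(X)dθ(Y))ξ`, and
`R̂(X,ξ)ξ = ∇_X X₀ - dθ(X) X₀` where `X₀ = -e^{2θ}∇θ`. -/
theorem graded_curvature_formulas
    {A : Type*} [CommRing A] [Algebra ℝ A] (S : SRData A) (θ Eexp : A)
    (G : Vec A) (hG : ∀ X : Vec A, S.g G X = X θ)
    (D : GConn A)
    (h1 : ∀ X Y : Vec A, D.conn (X, (0 : A)) (Y, (0 : A)) = (S.conn X Y, 0))
    (h2 : ∀ (X : Vec A) (h : A),
      D.conn (X, (0 : A)) ((0 : Vec A), h) = (0, h * X θ + X h))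
    (h3 : ∀ (h : A) (X : Vec A), D.conn ((0 : Vec A), h) (X, (0 : A)) = (0, h * X θ))
    (h4 : ∀ h k : A,
      D.conn ((0 : Vec A), h) ((0 : Vec A), k) = ((h * k) • (-(Eexp • G)), 0)) :
    (∀ X Y Z : Vec A,
      D.curv (X, (0 : A)) (Y, (0 : A)) (Z, (0 : A)) = (S.curv X Y Z, 0)) ∧
    (∀ X Y : Vec A,
      D.curv (X, (0 : A)) (Y, (0 : A)) ((0 : Vec A), (1 : A)) = 0) ∧
    (∀ X Y : Vec A,
      D.curv (X, (0 : A)) ((0 : Vec A), (1 : A)) (Y, (0 : A))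
        = (0, S.hess θ X Y + X θ * Y θ)) ∧
    (∀ X : Vec A,
      D.curv (X, (0 : A)) ((0 : Vec A), (1 : A)) ((0 : Vec A), (1 : A))
        = (S.conn X (-(Eexp • G)) - X θ • (-(Eexp • G)), 0)) := by
  have hc0 : ∀ Y : Vec A, S.conn 0 Y = 0 := fun Y => by
    simpa using S.conn_smul_left 0 0 Y
  refine ⟨?_, ?_, ?_, ?_⟩
  · intro X Y Z
    simp [GConn.curv, gbracket, h1, SRData.curv, Prod.sub_def]
  · intro X Y
    simp only [GConn.curv, gbracket, map_zero, Derivation.map_one_eq_zero, sub_zero, h1, h2]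
    ext <;> simp [Prod.sub_def, Derivation.commutator_apply] <;> ring
  · intro X Y
    simp only [GConn.curv, gbracket, map_zero, Derivation.map_one_eq_zero, sub_zero,
      one_mul, zero_mul, lie_zero, h1, h2, h3]
    ext <;> simp [Prod.sub_def, SRData.hess, hc0] <;> ring
  · intro X
    simp only [GConn.curv, gbracket, map_zero, Derivation.map_one_eq_zero, sub_zero,
      one_mul, mul_one, zero_mul, lie_zero, h1, h2, h3, h4, one_smul, zero_smul]
    ext <;> simp [Prod.sub_def]
end

section
/- If \theta is a smooth function on a semi-Riemannian manifold (M, g) with \Delta\theta = 0, then the symmetric 2-tensor 2 d\theta \otimes d\theta - |\nabla\theta|^2 g is divergence free. -/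
open scoped BigOperators

/-!
We model the algebra of smooth functions `C^∞(M)` abstractly as a commutative `ℝ`-algebra `A`;
vector fields on `M` are the `ℝ`-derivations `Vec A := Derivation ℝ A A`.  A semi-Riemannian
metric together with its Levi-Civita connection is encoded by the structure `SRData`
(symmetric nondegenerate-in-use `A`-bilinear form, plus a torsion-free metric-compatible
connection).  Traces are taken with respect to a (local) orthonormal frame `OrthoFrame`.
-/

variable (A : Type*) [CommRing A] [Algebra ℝ A]

variable {A}

section Aux

variable {A : Type*} [CommRing A] [Algebra ℝ A]

/-- Evaluation of a derivation at a fixed element, as an `A`-linear map. -/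
def evalL (f : A) : Vec A →ₗ[A] A where
  toFun D := D f
  map_add' X Y := by simp
  map_smul' r X := by simp

@[simp] lemma evalL_apply (f : A) (D : Vec A) : evalL f D = D f := rfl

/-- The Hessian, as an `A`-linear map in its first argument. -/
def hessL (S : SRData A) (f : A) (Y : Vec A) : Vec A →ₗ[A] A where
  toFun X := S.hess f X Y
  map_add' X Z := by
    simp [SRData.hess, S.conn_add_left, Derivation.add_apply]
    ring
  map_smul' r X := by
    simp [SRData.hess, S.conn_smul_left, smul_eq_mul]
    ring

@[simp] lemma hessL_apply (S : SRData A) (f : A) (Y X : Vec A) :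
    hessL S f Y X = S.hess f X Y := rfl

lemma hess_symm (S : SRData A) (f : A) (X Y : Vec A) :
    S.hess f X Y = S.hess f Y X := by
  have ht := S.torsion_free X Y
  have h := congrArg (fun D : Vec A => D f) ht
  simp only [Derivation.sub_apply, Derivation.commutator_apply] at h
  simp only [SRData.hess]
  linear_combination -h

lemma g_conn_grad (S : SRData A) (θ : A) (G : Vec A)
    (hG : ∀ X : Vec A, S.g G X = X θ) (X Y : Vec A) :
    S.g (S.conn X G) Y = S.hess θ X Y := by
  have h := S.metric_compat X G Y
  rw [hG, hG] at h
  simp only [SRData.hess]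
  linear_combination -h

/-- Applying a vector field to a function via the orthonormal frame expansion. -/
lemma apply_expand (S : SRData A) {n : ℕ} (F : OrthoFrame S n) (X : Vec A) (f : A) :
    X f = ∑ i, F.eps i * S.g X (F.E i) * (F.E i f) := by
  have h := congrArg (evalL f) (F.expand X)
  rw [map_sum] at h
  simpa [smul_eq_mul, mul_assoc] using h

lemma hess_expand (S : SRData A) {n : ℕ} (F : OrthoFrame S n) (f : A) (X Y : Vec A) :
    S.hess f X Y = ∑ i, F.eps i * S.g X (F.E i) * S.hess f (F.E i) Y := by
  have h := congrArg (hessL S f Y) (F.expand X)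
  rw [map_sum] at h
  simpa [smul_eq_mul, mul_assoc] using h

end Aux

/-- If `θ` is a smooth function on a semi-Riemannian manifold `(M, g)`
with `Δθ = 0`, then the symmetric 2-tensor `2 dθ ⊗ dθ - |∇θ|² g` is divergence free.
Here `∇θ` is the gradient (`g(∇θ, X) = X(θ)`) and `|∇θ|² = g(∇θ, ∇θ)`. -/
theorem stress_energy_tensor_divergence_free
    {A : Type*} [CommRing A] [Algebra ℝ A] (S : SRData A) {n : ℕ} (F : OrthoFrame S n)
    (θ : A) (G : Vec A) (hG : ∀ X : Vec A, S.g G X = X θ)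
    (hharmonic : S.lap F θ = 0) :
    ∀ X : Vec A,
      S.div2 F (fun Y Z => 2 * (Y θ * Z θ) - S.g G G * S.g Y Z) X = 0 := by
  intro X
  have hXc : X (S.g G G) = 2 * S.hess θ G X := by
    have h := S.metric_compat X G G
    rw [g_conn_grad S θ G hG, S.g_symm G (S.conn X G), g_conn_grad S θ G hG] at h
    rw [h, hess_symm S θ X G]; ring
  have key : ∀ i : Fin n,
      F.eps i * ((F.E i) (2 * ((F.E i) θ * X θ) - S.g G G * S.g (F.E i) X)
        - (2 * ((S.conn (F.E i) (F.E i)) θ * X θ)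
            - S.g G G * S.g (S.conn (F.E i) (F.E i)) X)
        - (2 * ((F.E i) θ * (S.conn (F.E i) X) θ)
            - S.g G G * S.g (F.E i) (S.conn (F.E i) X)))
      = 2 * X θ * (F.eps i * S.hess θ (F.E i) (F.E i))
        + 2 * (F.eps i * S.g G (F.E i) * S.hess θ (F.E i) X)
        - F.eps i * S.g X (F.E i) * ((F.E i) (S.g G G)) := by
    intro i
    have h2 : ∀ x : A, (F.E i) (2 * x) = 2 * (F.E i) x := by
      intro x; rw [two_mul, map_add, two_mul]
    have hm := S.metric_compat (F.E i) (F.E i) X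
    have hgi := hG (F.E i)
    rw [map_sub, h2, Derivation.leibniz, Derivation.leibniz, hgi,
      S.g_symm X (F.E i)]
    simp only [SRData.hess, smul_eq_mul]
    linear_combination (-(F.eps i) * (S.g G G)) * hm
  have hsum : S.div2 F (fun Y Z => 2 * (Y θ * Z θ) - S.g G G * S.g Y Z) X
      = 2 * X θ * (∑ i, F.eps i * S.hess θ (F.E i) (F.E i))
        + 2 * (∑ i, F.eps i * S.g G (F.E i) * S.hess θ (F.E i) X)
        - ∑ i, F.eps i * S.g X (F.E i) * ((F.E i) (S.g G G)) := by
    unfold SRData.div2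
    rw [Finset.mul_sum, Finset.mul_sum, ← Finset.sum_add_distrib,
      ← Finset.sum_sub_distrib]
    exact Finset.sum_congr rfl fun i _ => key i
  rw [hsum, ← hess_expand S F θ G X, ← apply_expand S F X (S.g G G), hXc,
    show (∑ i, F.eps i * S.hess θ (F.E i) (F.E i)) = 0 from hharmonic]
  ring
end

section
/- For the graded metric \hat{g} = (g,\theta) on \hat{T}M, the graded Hessian of a smooth function f satisfies \widehat{Hes}(f)(X,Y) = Hes(f)(X,Y), \widehat{Hes}(f)(\xi, X) = 0, and \widehat{Hes}(f)(\xi,\xi) = e^{2\theta}<\nabla f, \nabla\theta>; consequently tr(\widehat{Hes}(f)) = \Delta f + <\nabla f, \nabla\theta>. -/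
open scoped BigOperators

/-!
We model the algebra of smooth functions `C^∞(M)` abstractly as a commutative `ℝ`-algebra `A`;
vector fields on `M` are the `ℝ`-derivations `Vec A := Derivation ℝ A A`.  A semi-Riemannian
metric together with its Levi-Civita connection is encoded by the structure `SRData`
(symmetric nondegenerate-in-use `A`-bilinear form, plus a torsion-free metric-compatible
connection).  Traces are taken with respect to a (local) orthonormal frame `OrthoFrame`.
-/

variable (A : Type*) [CommRing A] [Algebra ℝ A]

variable {A}

/-!
The graded tangent bundle `T̂M = TM ⊕ ℝ`: its sections `𝔛̂(M) = 𝔛(M) ⊕ C^∞(M)ξ` are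
encoded as pairs `(X, h)` representing `X + hξ`, with even part `(X, 0)` and odd part
`(0, h)`.  The Lie algebroid structure has anchor `ρ(X + hξ) = X` and brackets
`[X, hξ] = X(h)ξ`, `[fξ, gξ] = 0`.
-/

variable (A)

variable {A}

variable (A)

variable {A}

/-- For the graded metric `ĝ = (g, θ)` on `T̂M` with Levi-Civita
connection `∇̂`, the graded Hessian of a smooth function `f` satisfies
`Ĥes(f)(X, Y) = Hes(f)(X, Y)`, `Ĥes(f)(ξ, X) = 0`, and
`Ĥes(f)(ξ, ξ) = e^{2θ}⟨∇f, ∇θ⟩`; consequently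
`tr(Ĥes(f)) = Δf + ⟨∇f, ∇θ⟩` (trace over the frame `{E₁, …, E_n, e^{-θ}ξ}`). -/
theorem graded_hessian_formulas
    {A : Type*} [CommRing A] [Algebra ℝ A] (S : SRData A) {n : ℕ} (F : OrthoFrame S n)
    (θ Eexp Einv : A) (hEinv : Eexp * Einv = 1)
    (G : Vec A) (hG : ∀ X : Vec A, S.g G X = X θ)
    (f : A) (Gf : Vec A) (hGf : ∀ X : Vec A, S.g Gf X = X f)
    (D : GConn A)
    (h1 : ∀ X Y : Vec A, D.conn (X, (0 : A)) (Y, (0 : A)) = (S.conn X Y, 0))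
    (h2 : ∀ (X : Vec A) (h : A),
      D.conn (X, (0 : A)) ((0 : Vec A), h) = (0, h * X θ + X h))
    (h3 : ∀ (h : A) (X : Vec A), D.conn ((0 : Vec A), h) (X, (0 : A)) = (0, h * X θ))
    (h4 : ∀ h k : A,
      D.conn ((0 : Vec A), h) ((0 : Vec A), k) = ((h * k) • (-(Eexp • G)), 0)) :
    (∀ X Y : Vec A, ghess D f (X, (0 : A)) (Y, (0 : A)) = S.hess f X Y) ∧
    (∀ X : Vec A, ghess D f ((0 : Vec A), (1 : A)) (X, (0 : A)) = 0) ∧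
    (ghess D f ((0 : Vec A), (1 : A)) ((0 : Vec A), (1 : A)) = Eexp * S.g Gf G) ∧
    ((∑ i, F.eps i * ghess D f (F.E i, (0 : A)) (F.E i, (0 : A)))
        + Einv * ghess D f ((0 : Vec A), (1 : A)) ((0 : Vec A), (1 : A))
      = S.lap F f + S.g Gf G) := by
  have key3 : ghess D f ((0 : Vec A), (1 : A)) ((0 : Vec A), (1 : A)) = Eexp * S.g Gf G := by
    have hg := hGf G
    rw [S.g_symm] at hg
    simp only [ghess, h4, S.g_symm Gf G, hg]
    simp
  refine ⟨fun X Y => by simp [ghess, SRData.hess, h1], fun X => by simp [ghess, h3], key3, ?_⟩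
  have : ∀ i, F.eps i * ghess D f (F.E i, (0 : A)) (F.E i, (0 : A))
      = F.eps i * S.hess f (F.E i) (F.E i) := fun i => by simp [ghess, SRData.hess, h1]
  rw [Finset.sum_congr rfl (fun i _ => this i), key3, SRData.lap]
  ring_nf
  rw [mul_comm Einv Eexp, hEinv]
  ring
end
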